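/- Let f : ℝ → ℝ be convex, let a ∈ ℝ, and let g_1, …, g_r ∈ ℝ be real numbers all of the same sign (all ≥ 0 or all ≤ 0). Then f(a + Σ_i g_i) − f(a) ≥ Σ_i (f(a + g_i) − f(a)). -/

import Mathlib

/-- Quadrangle inequality for a convex function with same-sign steps. -/
lemma convex_quadrangle (f : ℝ → ℝ) (hf : ConvexOn ℝ Set.univ f)
    (a s t : ℝ) (h : (0 ≤ s ∧ 0 ≤ t) ∨ (s ≤ 0 ∧ t ≤ 0)) :
    f (a + s) + f (a + t) ≤ f a + f (a + s + t) := by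
  rcases eq_or_ne (s + t) 0 with h0 | h0
  · -- same sign and sum zero forces s = t = 0
    have hs : s = 0 := by rcases h with ⟨hs, ht⟩ | ⟨hs, ht⟩ <;> linarith
    have ht : t = 0 := by linarith
    simp [hs, ht]
  · set σ := s + t with hσ
    have hσpos : 0 < |σ| := abs_pos.mpr h0
    -- λ = t / σ ∈ [0,1], 1-λ = s/σ
    have hst : 0 ≤ s / σ ∧ 0 ≤ t / σ := by
      rcases h with ⟨hs, ht⟩ | ⟨hs, ht⟩
      · have : 0 < σ := by cases lt_or_eq_of_le (by linarith : (0:ℝ) ≤ σ) with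
          | inl h => exact h
          | inr h => exact absurd h.symm h0
        constructor <;> positivity
      · have hneg : σ < 0 := by
          cases lt_or_eq_of_le (by linarith : σ ≤ 0) with
          | inl h => exact h
          | inr h => exact absurd h h0
        exact ⟨div_nonneg_of_nonpos hs hneg.le, div_nonneg_of_nonpos ht hneg.le⟩
    have hsum : s / σ + t / σ = 1 := by field_simp; exact hσ.symm
    have h1 : f (a + s) ≤ (s/σ) * f (a + σ) + (t/σ) * f a := by
      have := hf.2 (Set.mem_univ (a + σ)) (Set.mem_univ a) hst.1 hst.2 hsum
      have heq : (s/σ) • (a + σ) + (t/σ) • a = a + s := by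
        simp only [smul_eq_mul]
        linear_combination a * hsum + div_mul_cancel₀ s h0
      rw [heq] at this
      simpa using this
    have h2 : f (a + t) ≤ (t/σ) * f (a + σ) + (s/σ) * f a := by
      have := hf.2 (Set.mem_univ (a + σ)) (Set.mem_univ a) hst.2 hst.1
        (by linarith : t/σ + s/σ = 1)
      have heq : (t/σ) • (a + σ) + (s/σ) • a = a + t := by
        simp only [smul_eq_mul]
        linear_combination a * (by linarith : t/σ + s/σ = 1) + div_mul_cancel₀ t h0
      rw [heq] at this
      simpa using this
    have e1 : s/σ * f (a+σ) + t/σ * f (a+σ) = f (a+σ) := by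
      rw [← add_mul, hsum, one_mul]
    have e2 : s/σ * f a + t/σ * f a = f a := by
      rw [← add_mul, hsum, one_mul]
    have : f (a + s) + f (a + t) ≤ f (a + σ) + f a := by linarith
    have hσeq : a + s + t = a + σ := by rw [hσ]; ring
    rw [hσeq]; linarith

/-- Superadditivity of increments of a convex function along same-sign steps:
`f(a + Σ gᵢ) - f(a) ≥ Σ (f(a + gᵢ) - f(a))`. -/
theorem convex_superadditive_increments (f : ℝ → ℝ)
    (hf : ConvexOn ℝ Set.univ f) (a : ℝ) (r : ℕ) (g : Fin r → ℝ)
    (hsign : (∀ i, 0 ≤ g i) ∨ (∀ i, g i ≤ 0)) :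
    ∑ i, (f (a + g i) - f a) ≤ f (a + ∑ i, g i) - f a := by
  induction r with
  | zero => simp
  | succ n ih =>
    have hsign' : (∀ i, 0 ≤ (g ∘ Fin.succ) i) ∨ (∀ i, (g ∘ Fin.succ) i ≤ 0) := by
      rcases hsign with h | h
      · exact Or.inl fun i => h _
      · exact Or.inr fun i => h _
    have IH := ih (g ∘ Fin.succ) hsign'
    rw [Fin.sum_univ_succ, Fin.sum_univ_succ]
    set S := ∑ i : Fin n, g (Fin.succ i) with hS
    have hSsign : (0 ≤ g 0 ∧ 0 ≤ S) ∨ (g 0 ≤ 0 ∧ S ≤ 0) := by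
      rcases hsign with h | h
      · exact Or.inl ⟨h 0, Finset.sum_nonneg fun i _ => h _⟩
      · exact Or.inr ⟨h 0, Finset.sum_nonpos fun i _ => h _⟩
    have hq := convex_quadrangle f hf a (g 0) S hSsign
    have : ∑ i : Fin n, (f (a + (g ∘ Fin.succ) i) - f a) ≤ f (a + S) - f a := IH
    simp only [Function.comp] at this
    have haux : a + (g 0 + S) = a + g 0 + S := by ring
    calc f (a + g 0) - f a + ∑ i : Fin n, (f (a + g (Fin.succ i)) - f a)
        ≤ f (a + g 0) - f a + (f (a + S) - f a) := by linarith
      _ ≤ f (a + (g 0 + S)) - f a := by rw [haux]; linarith
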